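/- Define the SIAC kernel K : ℝ → ℝ by K := (−B(· | −2, −1, 0) + 14 · B(· | −1, 0, 1) − B(· | 0, 1, 2))/12, where B(· | s_0, s_1, s_2) denotes the degree-1 B-spline with knots s_0 < s_1 < s_2. Then K reproduces polynomials of degree up to 2 under convolution: for every δ ∈ {0, 1, 2} and every x ∈ ℝ, ∫_ℝ K(t) (x − t)^δ dt = x^δ. -/

import Mathlib

open MeasureTheory

/-- Divided difference `Δ[t_i, ..., t_j] h`, defined recursively:
`Δ[t_i] h = h (t i)` and
`Δ[t_{i:j}] h = (Δ[t_{i+1:j}] h - Δ[t_{i:j-1}] h) / (t j - t i)` for `i < j`. -/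
noncomputable def dd (t : ℤ → ℝ) (h : ℝ → ℝ) (i j : ℤ) : ℝ :=
  if _hij : i < j then
    (dd t h (i + 1) j - dd t h i (j - 1)) / (t j - t i)
  else h (t i)
termination_by (j - i).toNat
decreasing_by
  · omega
  · omega

/-- B-spline of degree `j - i - 1` with knots `t i, ..., t j`:
`B(x | t_{i:j}) = (t_j - t_i) · Δ[t_{i:j}] (max (· - x) 0)^(j-i-1)`. -/
noncomputable def bspline (t : ℤ → ℝ) (i j : ℤ) (x : ℝ) : ℝ :=
  (t j - t i) * dd t (fun u => (max (u - x) 0) ^ (j - i - 1).toNat) i j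

open intervalIntegral

set_option maxRecDepth 20000 in
lemma bsp1 (x : ℝ) : bspline (fun m : ℤ => (m : ℝ)) (-2) 0 x
    = max (0 - x) 0 - 2 * max (-1 - x) 0 + max (-2 - x) 0 := by
  rw [bspline]; simp [dd.eq_def]; norm_num; ring

set_option maxRecDepth 20000 in
lemma bsp2 (x : ℝ) : bspline (fun m : ℤ => (m : ℝ)) (-1) 1 x
    = max (1 - x) 0 - 2 * max (0 - x) 0 + max (-1 - x) 0 := by
  rw [bspline]; simp [dd.eq_def]; norm_num; ring

set_option maxRecDepth 20000 in
lemma bsp3 (x : ℝ) : bspline (fun m : ℤ => (m : ℝ)) 0 2 x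
    = max (2 - x) 0 - 2 * max (1 - x) 0 + max (0 - x) 0 := by
  rw [bspline]; simp [dd.eq_def]; norm_num; ring

lemma ftc_poly (c0 c1 c2 c3 a b : ℝ) :
    ∫ u in a..b, (c0 + c1*u + c2*u^2 + c3*u^3) =
      (c0*b + c1*b^2/2 + c2*b^3/3 + c3*b^4/4) - (c0*a + c1*a^2/2 + c2*a^3/3 + c3*a^4/4) := by
  have hd : ∀ u ∈ Set.uIcc a b, HasDerivAt
      (fun u : ℝ => c0*u + c1*u^2/2 + c2*u^3/3 + c3*u^4/4)
      (c0 + c1*u + c2*u^2 + c3*u^3) u := by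
    intro u _
    have h1 : HasDerivAt (fun u : ℝ => u) 1 u := hasDerivAt_id u
    have h2 := hasDerivAt_pow 2 u
    have h3 := hasDerivAt_pow 3 u
    have h4 := hasDerivAt_pow 4 u
    have := (((h1.const_mul c0).add ((h2.const_mul c1).div_const 2)).add
        ((h3.const_mul c2).div_const 3)).add ((h4.const_mul c3).div_const 4)
    refine this.congr_deriv ?_
    push_cast; ring
  exact integral_eq_sub_of_hasDerivAt hd
    ((by continuity : Continuous fun u : ℝ => c0 + c1*u + c2*u^2 + c3*u^3).intervalIntegrable _ _)

lemma I0 (a b α β x : ℝ) : ∫ u in α..β, (a + b*u) * (x-u)^0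
    = (a*β + b*β^2/2) - (a*α + b*α^2/2) := by
  rw [integral_congr (g := fun u => a + b*u + 0*u^2 + 0*u^3) (fun u _ => by ring)]
  rw [ftc_poly]; ring

lemma I1 (a b α β x : ℝ) : ∫ u in α..β, (a + b*u) * (x-u)^1
    = ((a*x)*β + (b*x-a)*β^2/2 + (-b)*β^3/3) - ((a*x)*α + (b*x-a)*α^2/2 + (-b)*α^3/3) := by
  rw [integral_congr (g := fun u => a*x + (b*x-a)*u + (-b)*u^2 + 0*u^3) (fun u _ => by ring)]
  rw [ftc_poly]; ring

lemma I2 (a b α β x : ℝ) : ∫ u in α..β, (a + b*u) * (x-u)^2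
    = ((a*x^2)*β + (b*x^2-2*a*x)*β^2/2 + (a-2*b*x)*β^3/3 + b*β^4/4)
      - ((a*x^2)*α + (b*x^2-2*a*x)*α^2/2 + (a-2*b*x)*α^3/3 + b*α^4/4) := by
  rw [integral_congr (g := fun u => a*x^2 + (b*x^2-2*a*x)*u + (a-2*b*x)*u^2 + b*u^3)
    (fun u _ => by ring)]
  rw [ftc_poly]

/-- The SIAC kernel
`K := (-B(· | -2,-1,0) + 14 · B(· | -1,0,1) - B(· | 0,1,2)) / 12`
built from degree-1 B-splines reproduces polynomials of degree up to 2 under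
convolution: `∫ K(t) (x - t)^δ dt = x^δ` for every `δ ∈ {0, 1, 2}` and every `x ∈ ℝ`. -/
theorem stmt13
    (K : ℝ → ℝ)
    (hK : ∀ u : ℝ, K u = (-(bspline (fun m : ℤ => (m : ℝ)) (-2) 0 u)
        + 14 * bspline (fun m : ℤ => (m : ℝ)) (-1) 1 u
        - bspline (fun m : ℤ => (m : ℝ)) 0 2 u) / 12)
    (δ : ℕ) (hδ : δ ≤ 2) (x : ℝ) :
    ∫ u : ℝ, K u * (x - u) ^ δ = x ^ δ := by
  have hKc : ∀ u : ℝ, K u = (-(max (0 - u) 0 - 2 * max (-1 - u) 0 + max (-2 - u) 0)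
      + 14 * (max (1 - u) 0 - 2 * max (0 - u) 0 + max (-1 - u) 0)
      - (max (2 - u) 0 - 2 * max (1 - u) 0 + max (0 - u) 0)) / 12 := by
    intro u; rw [hK, bsp1, bsp2, bsp3]
  -- K vanishes outside (-2, 2]
  have hout : ∀ u : ℝ, u ∉ Set.Ioc (-2:ℝ) 2 → K u = 0 := by
    intro u hu
    rw [Set.mem_Ioc, not_and_or, not_lt, not_le] at hu
    rw [hKc]
    rcases hu with hu | hu
    · rw [max_eq_left (by linarith), max_eq_left (by linarith), max_eq_left (by linarith),
        max_eq_left (by linarith), max_eq_left (by linarith)]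
      ring
    · rw [max_eq_right (by linarith), max_eq_right (by linarith), max_eq_right (by linarith),
        max_eq_right (by linarith), max_eq_right (by linarith)]
      ring
  -- continuity
  have hKfun : K = fun u => (-(max (0 - u) 0 - 2 * max (-1 - u) 0 + max (-2 - u) 0)
      + 14 * (max (1 - u) 0 - 2 * max (0 - u) 0 + max (-1 - u) 0)
      - (max (2 - u) 0 - 2 * max (1 - u) 0 + max (0 - u) 0)) / 12 := funext hKc
  have hm : ∀ c : ℝ, Continuous fun u : ℝ => max (c - u) 0 :=
    fun c => (continuous_const.sub continuous_id).max continuous_const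
  have hcont : Continuous fun u : ℝ => K u * (x - u) ^ δ := by
    rw [hKfun]
    exact (Continuous.div_const (((((hm 0).sub (continuous_const.mul (hm (-1)))).add
      (hm (-2))).neg.add (continuous_const.mul (((hm 1).sub
      (continuous_const.mul (hm 0))).add (hm (-1))))).sub (((hm 2).sub
      (continuous_const.mul (hm 1))).add (hm 0))) 12).mul
      ((continuous_const.sub continuous_id).pow δ)
  have hint : ∀ a b : ℝ, IntervalIntegrable (fun u => K u * (x - u) ^ δ) volume a b :=
    fun a b => hcont.intervalIntegrable a b
  -- reduce to interval integral
  have hind : (fun u : ℝ => K u * (x - u) ^ δ)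
      = Set.indicator (Set.Ioc (-2:ℝ) 2) (fun u => K u * (x - u) ^ δ) := by
    funext u
    by_cases h : u ∈ Set.Ioc (-2:ℝ) 2
    · rw [Set.indicator_of_mem h]
    · rw [Set.indicator_of_notMem h, hout u h, zero_mul]
  rw [hind, MeasureTheory.integral_indicator measurableSet_Ioc,
    ← intervalIntegral.integral_of_le (by norm_num : (-2:ℝ) ≤ 2)]
  rw [← integral_add_adjacent_intervals (a := -2) (b := -1) (c := 2) (hint _ _) (hint _ _),
    ← integral_add_adjacent_intervals (a := -1) (b := 0) (c := 2) (hint _ _) (hint _ _),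
    ← integral_add_adjacent_intervals (a := 0) (b := 1) (c := 2) (hint _ _) (hint _ _)]
  -- piecewise identification
  have e1 : Set.EqOn (fun u => K u * (x - u) ^ δ)
      (fun u => ((-1/6 : ℝ) + (-1/12)*u) * (x-u)^δ) (Set.uIcc (-2:ℝ) (-1)) := by
    intro u hu
    rw [Set.uIcc_of_le (by norm_num)] at hu
    obtain ⟨h1, h2⟩ := hu
    simp only
    rw [hKc, max_eq_left (by linarith), max_eq_left (by linarith), max_eq_right (by linarith), max_eq_left (by linarith), max_eq_left (by linarith)]
    ring
  have e2 : Set.EqOn (fun u => K u * (x - u) ^ δ)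
      (fun u => ((7/6 : ℝ) + (5/4)*u) * (x-u)^δ) (Set.uIcc (-1:ℝ) 0) := by
    intro u hu
    rw [Set.uIcc_of_le (by norm_num)] at hu
    obtain ⟨h1, h2⟩ := hu
    simp only
    rw [hKc, max_eq_left (by linarith), max_eq_right (by linarith), max_eq_right (by linarith), max_eq_left (by linarith), max_eq_left (by linarith)]
    ring
  have e3 : Set.EqOn (fun u => K u * (x - u) ^ δ)
      (fun u => ((7/6 : ℝ) + (-5/4)*u) * (x-u)^δ) (Set.uIcc (0:ℝ) 1) := by
    intro u hu
    rw [Set.uIcc_of_le (by norm_num)] at hu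
    obtain ⟨h1, h2⟩ := hu
    simp only
    rw [hKc, max_eq_right (by linarith), max_eq_right (by linarith), max_eq_right (by linarith), max_eq_left (by linarith), max_eq_left (by linarith)]
    ring
  have e4 : Set.EqOn (fun u => K u * (x - u) ^ δ)
      (fun u => ((-1/6 : ℝ) + (1/12)*u) * (x-u)^δ) (Set.uIcc (1:ℝ) 2) := by
    intro u hu
    rw [Set.uIcc_of_le (by norm_num)] at hu
    obtain ⟨h1, h2⟩ := hu
    simp only
    rw [hKc, max_eq_right (by linarith), max_eq_right (by linarith), max_eq_right (by linarith), max_eq_right (by linarith), max_eq_left (by linarith)]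
    ring
  rw [integral_congr e1, integral_congr e2, integral_congr e3, integral_congr e4]
  interval_cases δ
  · rw [I0, I0, I0, I0]; norm_num
  · rw [I1, I1, I1, I1]; ring_nf
  · rw [I2, I2, I2, I2]; ring_nf
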